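/- Let X be a nonempty finite design space, let p and s be natural numbers with 0 < s and s < p, let m : X → Matrix (Fin p) (Fin p) ℝ assign to each design point a symmetric positive semidefinite matrix, and let A : Matrix (Fin p) (Fin s) ℝ have rank s. For a design w with M(w) positive definite, define the sensitivity function d(x, w) = trace(M(w)⁻¹ * A * (Aᵀ * M(w)⁻¹ * A)⁻¹ * Aᵀ * M(w)⁻¹ * m(x)). Suppose w* is a design such that M(w*) is positive definite. Then w* maximizes w ↦ -log(det(Aᵀ * M(w)⁻¹ * A)) over all designs with positive definite information matrix if and only if for every design w with M(w) positive definite, max_{x ∈ X} d(x, w*) ≤ max_{x ∈ X} d(x, w). -/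

import Mathlib

open Matrix BigOperators

namespace DAaux

variable {p s : ℕ}

lemma psd_trace_nonneg {n : Type*} [Fintype n] {P : Matrix n n ℝ} (hP : P.PosSemidef) :
    0 ≤ P.trace := by
  classical
  apply Finset.sum_nonneg
  intro i _
  have := hP.dotProduct_mulVec_nonneg (Pi.single i 1)
  simpa [Matrix.mulVec_single, dotProduct, Pi.single_apply] using this

open scoped MatrixOrder in
lemma psd_trace_mul_nonneg {n : Type*} [Fintype n] {P Q : Matrix n n ℝ}
    (hP : P.PosSemidef) (hQ : Q.PosSemidef) : 0 ≤ (P * Q).trace := by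
  classical
  have hS : CFC.sqrt P * CFC.sqrt P = P := CFC.sqrt_mul_sqrt_self P hP.nonneg
  have h1 : (P * Q).trace = (CFC.sqrt P * Q * CFC.sqrt P).trace := by
    conv_lhs => rw [← hS]
    rw [Matrix.mul_assoc, Matrix.trace_mul_comm, Matrix.mul_assoc]
  rw [h1]
  have h2 : (CFC.sqrt P * Q * CFC.sqrt P).PosSemidef := by
    have := hQ.mul_mul_conjTranspose_same (CFC.sqrt P)
    rwa [(CFC.sqrt_nonneg P).posSemidef.1] at this
  exact psd_trace_nonneg h2

lemma psd_trace_mul_mono {n : Type*} [Fintype n] {P Q R : Matrix n n ℝ}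
    (hPQ : (Q - P).PosSemidef) (hR : R.PosSemidef) : (P * R).trace ≤ (Q * R).trace := by
  have := psd_trace_mul_nonneg hPQ hR
  rw [Matrix.sub_mul, Matrix.trace_sub] at this
  linarith

lemma symm_of_posdef {n : Type*} [Fintype n] {M : Matrix n n ℝ} (hM : M.PosDef) : Mᵀ = M := by
  have := hM.1
  rwa [Matrix.IsHermitian, Matrix.conjTranspose_eq_transpose_of_trivial] at this

lemma inv_symm_of_posdef {n : Type*} [Fintype n] [DecidableEq n]
    {M : Matrix n n ℝ} (hM : M.PosDef) : M⁻¹ᵀ = M⁻¹ := by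
  rw [Matrix.transpose_nonsing_inv, symm_of_posdef hM]

lemma mulVec_inj {A : Matrix (Fin p) (Fin s) ℝ} (hA : A.rank = s) :
    ∀ v : Fin s → ℝ, A *ᵥ v = 0 → v = 0 := by
  intro v hv
  have hker : LinearMap.ker A.mulVecLin = ⊥ := by
    have h1 := LinearMap.finrank_range_add_finrank_ker A.mulVecLin
    have h2 : Module.finrank ℝ (LinearMap.range A.mulVecLin) = s := hA
    rw [h2] at h1
    simp only [Module.finrank_pi, Fintype.card_fin] at h1
    have h3 : Module.finrank ℝ (LinearMap.ker A.mulVecLin) = 0 := by omega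
    exact Submodule.finrank_eq_zero.mp h3
  have : v ∈ LinearMap.ker A.mulVecLin := by
    simpa [Matrix.mulVecLin_apply] using hv
  rwa [hker, Submodule.mem_bot] at this

lemma posdef_conj {n m : Type*} [Fintype n] [Fintype m]
    {M : Matrix n n ℝ} (hM : M.PosDef) (B : Matrix n m ℝ)
    (hB : ∀ v : m → ℝ, B *ᵥ v = 0 → v = 0) :
    (Bᵀ * M * B).PosDef := by
  refine Matrix.posDef_iff_dotProduct_mulVec.mpr ⟨?_, ?_⟩
  · have := Matrix.isHermitian_conjTranspose_mul_mul B hM.1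
    rwa [Matrix.conjTranspose_eq_transpose_of_trivial] at this
  · intro x hx
    have hBx : B *ᵥ x ≠ 0 := fun h => hx (hB x h)
    have := hM.dotProduct_mulVec_pos hBx
    have hrw : star x ⬝ᵥ ((Bᵀ * M * B) *ᵥ x) = star (B *ᵥ x) ⬝ᵥ (M *ᵥ (B *ᵥ x)) := by
      rw [← Matrix.conjTranspose_eq_transpose_of_trivial]
      rw [← Matrix.mulVec_mulVec, ← Matrix.mulVec_mulVec]
      rw [dotProduct_mulVec, Matrix.vecMul_conjTranspose]
      simp [dotProduct_mulVec]
    rwa [hrw]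

lemma herm_trace_eq {n : Type*} [Fintype n] [DecidableEq n]
    {B : Matrix n n ℝ} (hB : B.IsHermitian) :
    B.trace = ∑ i, hB.eigenvalues i := by
  rw [hB.trace_eq_sum_eigenvalues]
  simp

lemma log_det_le {n : Type*} [Fintype n] [DecidableEq n]
    {B : Matrix n n ℝ} (hB : B.PosDef) :
    Real.log B.det + (Fintype.card n : ℝ) ≤ B.trace := by
  have hdet : B.det = ∏ i, hB.1.eigenvalues i := by
    simpa using hB.1.det_eq_prod_eigenvalues
  have hpos : ∀ i : n, 0 < hB.1.eigenvalues i := hB.eigenvalues_pos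
  have hlog : Real.log B.det = ∑ i, Real.log (hB.1.eigenvalues i) := by
    rw [hdet, Real.log_prod]
    intro i _
    exact (hpos i).ne'
  rw [hlog, herm_trace_eq hB.1]
  have : ∀ i : n, Real.log (hB.1.eigenvalues i) ≤ hB.1.eigenvalues i - 1 :=
    fun i => Real.log_le_sub_one_of_pos (hpos i)
  have hsum := Finset.sum_le_sum (fun i (_ : i ∈ Finset.univ) => this i)
  rw [Finset.sum_sub_distrib] at hsum
  simp only [Finset.sum_const, Finset.card_univ, nsmul_eq_mul, mul_one] at hsum
  linarith

lemma gauss_markov {A : Matrix (Fin p) (Fin s) ℝ}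
    {M : Matrix (Fin p) (Fin p) ℝ} (hM : M.PosDef)
    (hN : (Aᵀ * M⁻¹ * A).PosDef)
    (L : Matrix (Fin s) (Fin p) ℝ) (hL : L * A = 1) :
    (L * M * Lᵀ - (Aᵀ * M⁻¹ * A)⁻¹).PosSemidef := by
  set N := Aᵀ * M⁻¹ * A with hNdef
  set G := N⁻¹ * Aᵀ * M⁻¹ with hGdef
  have hMdet : IsUnit M.det := hM.det_pos.ne'.isUnit
  have hNdet : IsUnit N.det := hN.det_pos.ne'.isUnit
  have hGt : Gᵀ = M⁻¹ * A * N⁻¹ := by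
    rw [hGdef, Matrix.transpose_mul, Matrix.transpose_mul, inv_symm_of_posdef hM,
      Matrix.transpose_transpose, Matrix.transpose_nonsing_inv, symm_of_posdef hN,
      ← Matrix.mul_assoc]
  have e1 : L * M * Gᵀ = N⁻¹ := by
    rw [hGt]
    calc L * M * (M⁻¹ * A * N⁻¹) = L * ((M * M⁻¹) * (A * N⁻¹)) := by
          simp only [Matrix.mul_assoc]
      _ = (L * A) * N⁻¹ := by
          rw [Matrix.mul_nonsing_inv M hMdet, Matrix.one_mul, ← Matrix.mul_assoc]
      _ = N⁻¹ := by rw [hL, Matrix.one_mul]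
  have e2 : G * M * Lᵀ = N⁻¹ := by
    rw [hGdef]
    calc N⁻¹ * Aᵀ * M⁻¹ * M * Lᵀ = N⁻¹ * (Aᵀ * ((M⁻¹ * M) * Lᵀ)) := by
          simp only [Matrix.mul_assoc]
      _ = N⁻¹ * (L * A)ᵀ := by
          rw [Matrix.nonsing_inv_mul M hMdet, Matrix.one_mul, Matrix.transpose_mul]
      _ = N⁻¹ := by rw [hL, Matrix.transpose_one, Matrix.mul_one]
  have e3 : G * M * Gᵀ = N⁻¹ := by
    rw [hGt, hGdef]
    calc N⁻¹ * Aᵀ * M⁻¹ * M * (M⁻¹ * A * N⁻¹)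
        = N⁻¹ * ((Aᵀ * ((M⁻¹ * M) * M⁻¹) * A) * N⁻¹) := by simp only [Matrix.mul_assoc]
      _ = N⁻¹ * (N * N⁻¹) := by
          rw [Matrix.nonsing_inv_mul M hMdet, Matrix.one_mul, hNdef]
      _ = N⁻¹ := by rw [Matrix.mul_nonsing_inv N hNdet, Matrix.mul_one]
  have key : (L - G) * M * (L - G)ᵀ = L * M * Lᵀ - N⁻¹ := by
    rw [Matrix.transpose_sub, Matrix.sub_mul, Matrix.sub_mul, Matrix.mul_sub, Matrix.mul_sub,
      e1, e2, e3]
    abel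
  rw [← key]
  have := hM.posSemidef.mul_mul_conjTranspose_same (L - G)
  rwa [Matrix.conjTranspose_eq_transpose_of_trivial] at this

lemma trace_H_self {A : Matrix (Fin p) (Fin s) ℝ} {M : Matrix (Fin p) (Fin p) ℝ}
    (hM : M.PosDef) (hN : (Aᵀ * M⁻¹ * A).PosDef) :
    (M⁻¹ * A * (Aᵀ * M⁻¹ * A)⁻¹ * Aᵀ * M⁻¹ * M).trace = (s : ℝ) := by
  set N := Aᵀ * M⁻¹ * A with hNdef
  have hMdet : IsUnit M.det := hM.det_pos.ne'.isUnit
  have hNdet : IsUnit N.det := hN.det_pos.ne'.isUnit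
  have e1 : M⁻¹ * A * N⁻¹ * Aᵀ * M⁻¹ * M = (M⁻¹ * A * N⁻¹) * Aᵀ := by
    calc M⁻¹ * A * N⁻¹ * Aᵀ * M⁻¹ * M = M⁻¹ * (A * (N⁻¹ * (Aᵀ * (M⁻¹ * M)))) := by
          simp only [Matrix.mul_assoc]
      _ = (M⁻¹ * A * N⁻¹) * Aᵀ := by
          rw [Matrix.nonsing_inv_mul M hMdet, Matrix.mul_one]; simp only [Matrix.mul_assoc]
  rw [e1, Matrix.trace_mul_comm]
  have e2 : Aᵀ * (M⁻¹ * A * N⁻¹) = N * N⁻¹ := by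
    rw [hNdef]; simp only [Matrix.mul_assoc]
  rw [e2, Matrix.mul_nonsing_inv N hNdet, Matrix.trace_one]
  simp

lemma H_psd {A : Matrix (Fin p) (Fin s) ℝ} {M : Matrix (Fin p) (Fin p) ℝ}
    (hM : M.PosDef) (hN : (Aᵀ * M⁻¹ * A).PosDef) :
    (M⁻¹ * A * (Aᵀ * M⁻¹ * A)⁻¹ * Aᵀ * M⁻¹).PosSemidef := by
  have h := (hN.inv).posSemidef.mul_mul_conjTranspose_same (M⁻¹ * A)
  rw [Matrix.conjTranspose_eq_transpose_of_trivial, Matrix.transpose_mul,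
    inv_symm_of_posdef hM] at h
  convert h using 1
  · rfl
  simp only [Matrix.mul_assoc]

open scoped MatrixOrder in
lemma ineq1 {A : Matrix (Fin p) (Fin s) ℝ}
    (hAinj : ∀ v : Fin s → ℝ, A *ᵥ v = 0 → v = 0)
    {M M' : Matrix (Fin p) (Fin p) ℝ} (hM : M.PosDef) (hM' : M'.PosDef) :
    -Real.log (Aᵀ * M⁻¹ * A).det ≤ -Real.log (Aᵀ * M'⁻¹ * A).det
      + (M'⁻¹ * A * (Aᵀ * M'⁻¹ * A)⁻¹ * Aᵀ * M'⁻¹ * M).trace - s := by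
  set N := Aᵀ * M⁻¹ * A with hNdef
  set N' := Aᵀ * M'⁻¹ * A with hN'def
  have hN : N.PosDef := posdef_conj hM.inv A hAinj
  have hN' : N'.PosDef := posdef_conj hM'.inv A hAinj
  have hM'det : IsUnit M'.det := hM'.det_pos.ne'.isUnit
  have hN'det : IsUnit N'.det := hN'.det_pos.ne'.isUnit
  -- square root of N'
  set R := CFC.sqrt N' with hRdef
  have hRR : R * R = N' := CFC.sqrt_mul_sqrt_self N' hN'.posSemidef.nonneg
  have hRsymm : Rᵀ = R := by
    have := (CFC.sqrt_nonneg N').posSemidef.1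
    rwa [Matrix.IsHermitian, Matrix.conjTranspose_eq_transpose_of_trivial] at this
  have hRdet : IsUnit R.det := by
    have : R.det * R.det = N'.det := by rw [← Matrix.det_mul, hRR]
    have h2 : R.det ≠ 0 := by
      intro h0
      rw [h0, mul_zero] at this
      exact hN'.det_pos.ne (by linarith)
    exact h2.isUnit
  have hRinj : ∀ v : Fin s → ℝ, R *ᵥ v = 0 → v = 0 := by
    intro v hv
    have hinj : Function.Injective R.mulVec :=
      (Matrix.mulVec_injective_iff_isUnit).mpr ((Matrix.isUnit_iff_isUnit_det R).mpr hRdet)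
    have : R *ᵥ v = R *ᵥ 0 := by rw [hv, Matrix.mulVec_zero]
    exact hinj this
  -- B = R * N⁻¹ * R is PD
  have hB : (R * N⁻¹ * R).PosDef := by
    have := posdef_conj hN.inv R hRinj
    rwa [hRsymm] at this
  have hld := log_det_le hB
  rw [Fintype.card_fin] at hld
  -- determinant of B
  have hdetB : (R * N⁻¹ * R).det = N'.det * N.det⁻¹ := by
    rw [Matrix.det_mul, Matrix.det_mul, Matrix.det_nonsing_inv, Ring.inverse_eq_inv]
    rw [mul_comm R.det _, mul_assoc, ← Matrix.det_mul, hRR]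
    ring
  -- trace of B
  have htrB : (R * N⁻¹ * R).trace = (N⁻¹ * N').trace := by
    rw [Matrix.trace_mul_comm, ← Matrix.mul_assoc, hRR, Matrix.trace_mul_comm]
  have hlogB : Real.log (R * N⁻¹ * R).det = Real.log N'.det - Real.log N.det := by
    rw [hdetB, Real.log_mul hN'.det_pos.ne' (inv_ne_zero hN.det_pos.ne'), Real.log_inv]
    ring
  -- (i): log N'.det - log N.det + s ≤ trace (N⁻¹ * N')
  have hi : Real.log N'.det - Real.log N.det + (s : ℝ) ≤ (N⁻¹ * N').trace := by
    rw [← htrB, ← hlogB]; exact hld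
  -- Gauss-Markov step
  set L := N'⁻¹ * Aᵀ * M'⁻¹ with hLdef
  have hLA : L * A = 1 := by
    rw [hLdef]
    calc N'⁻¹ * Aᵀ * M'⁻¹ * A = N'⁻¹ * (Aᵀ * M'⁻¹ * A) := by simp only [Matrix.mul_assoc]
      _ = 1 := by rw [← hN'def, Matrix.nonsing_inv_mul N' hN'det]
  have hGM := gauss_markov hM hN L hLA
  have hmono : (N⁻¹ * N').trace ≤ ((L * M * Lᵀ) * N').trace :=
    psd_trace_mul_mono hGM hN'.posSemidef
  -- identify trace (L*M*Lᵀ*N') with trace (H' * M)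
  have hLt : Lᵀ = M'⁻¹ * A * N'⁻¹ := by
    rw [hLdef, Matrix.transpose_mul, Matrix.transpose_mul, inv_symm_of_posdef hM',
      Matrix.transpose_transpose, Matrix.transpose_nonsing_inv, symm_of_posdef hN',
      ← Matrix.mul_assoc]
  have htr2 : ((L * M * Lᵀ) * N').trace
      = (M'⁻¹ * A * N'⁻¹ * Aᵀ * M'⁻¹ * M).trace := by
    rw [hLt, hLdef]
    have lhs_eq : N'⁻¹ * Aᵀ * M'⁻¹ * M * (M'⁻¹ * A * N'⁻¹) * N'
        = N'⁻¹ * (Aᵀ * (M'⁻¹ * (M * (M'⁻¹ * A)))) := by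
      calc N'⁻¹ * Aᵀ * M'⁻¹ * M * (M'⁻¹ * A * N'⁻¹) * N'
          = N'⁻¹ * (Aᵀ * (M'⁻¹ * (M * (M'⁻¹ * (A * (N'⁻¹ * N'))))))  := by
            simp only [Matrix.mul_assoc]
        _ = N'⁻¹ * (Aᵀ * (M'⁻¹ * (M * (M'⁻¹ * A)))) := by
            rw [Matrix.nonsing_inv_mul N' hN'det, Matrix.mul_one]
    rw [lhs_eq, Matrix.trace_mul_comm]
    have rhs_eq : Aᵀ * (M'⁻¹ * (M * (M'⁻¹ * A))) * N'⁻¹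
        = (Aᵀ * (M'⁻¹ * M)) * ((M'⁻¹ * A) * N'⁻¹) := by simp only [Matrix.mul_assoc]
    rw [rhs_eq, Matrix.trace_mul_comm]
    congr 1
    simp only [Matrix.mul_assoc]
  -- conclude
  have hfin : Real.log N'.det - Real.log N.det + (s : ℝ)
      ≤ (M'⁻¹ * A * N'⁻¹ * Aᵀ * M'⁻¹ * M).trace := by
    calc Real.log N'.det - Real.log N.det + (s : ℝ) ≤ (N⁻¹ * N').trace := hi
      _ ≤ ((L * M * Lᵀ) * N').trace := hmono
      _ = _ := htr2
  linarith



lemma continuousAt_matrix_mul' {Y : Type*} [TopologicalSpace Y] {l m n : Type*}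
    [Fintype m] {f : Y → Matrix l m ℝ} {g : Y → Matrix m n ℝ} {y : Y}
    (hf : ContinuousAt f y) (hg : ContinuousAt g y) :
    ContinuousAt (fun z => f z * g z) y := by
  refine continuousAt_pi.mpr ?_
  intro i
  rw [continuousAt_pi]
  intro j
  simp only [Matrix.mul_apply]
  exact tendsto_finset_sum _ fun k _ =>
    (Filter.Tendsto.mul
      (continuousAt_pi.1 (continuousAt_pi.1 hf i) k)
      (continuousAt_pi.1 (continuousAt_pi.1 hg k) j))

lemma continuousAt_matrix_trace {Y : Type*} [TopologicalSpace Y] {n : Type*} [Fintype n]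
    {f : Y → Matrix n n ℝ} {y : Y} (hf : ContinuousAt f y) :
    ContinuousAt (fun z => (f z).trace) y := by
  simp only [Matrix.trace, Matrix.diag]
  exact tendsto_finset_sum _ fun i _ => (continuousAt_pi.1 (continuousAt_pi.1 hf i) i)

lemma posdef_smul {n : Type*} [Fintype n] {M : Matrix n n ℝ} (hM : M.PosDef)
    {c : ℝ} (hc : 0 < c) : (c • M).PosDef := by
  refine Matrix.posDef_iff_dotProduct_mulVec.mpr ⟨?_, ?_⟩
  · show (c • M)ᴴ = c • M
    rw [Matrix.conjTranspose_smul, hM.1.eq]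
    simp
  · intro x hx
    rw [Matrix.smul_mulVec, dotProduct_smul]
    simpa using mul_pos hc (hM.dotProduct_mulVec_pos hx)

lemma psd_smul {n : Type*} [Fintype n] {M : Matrix n n ℝ} (hM : M.PosSemidef)
    {c : ℝ} (hc : 0 ≤ c) : (c • M).PosSemidef := by
  refine Matrix.posSemidef_iff_dotProduct_mulVec.mpr ⟨?_, ?_⟩
  · show (c • M)ᴴ = c • M
    rw [Matrix.conjTranspose_smul, hM.1.eq]
    simp
  · intro x
    rw [Matrix.smul_mulVec, dotProduct_smul]
    simpa using mul_nonneg hc (hM.dotProduct_mulVec_nonneg x)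


lemma key {p s : ℕ} {A : Matrix (Fin p) (Fin s) ℝ}
    (hAinj : ∀ v : Fin s → ℝ, A *ᵥ v = 0 → v = 0)
    {M0 Mv : Matrix (Fin p) (Fin p) ℝ} (hM0 : M0.PosDef) (hMv : Mv.PosSemidef)
    (hopt : ∀ t : ℝ, t ∈ Set.Ioo (0:ℝ) 1 →
      -Real.log (Aᵀ * ((1 - t) • M0 + t • Mv)⁻¹ * A).det ≤
        -Real.log (Aᵀ * M0⁻¹ * A).det) :
    (M0⁻¹ * A * (Aᵀ * M0⁻¹ * A)⁻¹ * Aᵀ * M0⁻¹ * Mv).trace ≤ (s : ℝ) := by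
  set F : ℝ → Matrix (Fin p) (Fin p) ℝ := fun t => (1 - t) • M0 + t • Mv with hF
  have hF0 : F 0 = M0 := by simp [hF]
  have hFPD : ∀ t : ℝ, t ∈ Set.Ioo (0:ℝ) 1 → (F t).PosDef := by
    intro t ht
    exact (posdef_smul hM0 (by simp only [sub_pos]; exact ht.2)).add_posSemidef
      (psd_smul hMv ht.1.le)
  set f : ℝ → ℝ :=
    fun t => ((F t)⁻¹ * A * (Aᵀ * (F t)⁻¹ * A)⁻¹ * Aᵀ * (F t)⁻¹ * Mv).trace with hf
  have hfle : ∀ t : ℝ, t ∈ Set.Ioo (0:ℝ) 1 → f t ≤ (s : ℝ) := by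
    intro t ht
    have hPDt := hFPD t ht
    have hNt : (Aᵀ * (F t)⁻¹ * A).PosDef := posdef_conj hPDt.inv A hAinj
    have h1 := ineq1 hAinj hM0 hPDt
    have h2 := hopt t ht
    have htr0 : (s : ℝ) ≤ ((F t)⁻¹ * A * (Aᵀ * (F t)⁻¹ * A)⁻¹ * Aᵀ * (F t)⁻¹ * M0).trace := by
      linarith
    have hid := trace_H_self hPDt hNt
    have hsplit : ((F t)⁻¹ * A * (Aᵀ * (F t)⁻¹ * A)⁻¹ * Aᵀ * (F t)⁻¹ * F t).trace
        = (1 - t) * ((F t)⁻¹ * A * (Aᵀ * (F t)⁻¹ * A)⁻¹ * Aᵀ * (F t)⁻¹ * M0).trace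
          + t * f t := by
      rw [hf]
      conv_lhs => rw [hF]
      rw [Matrix.mul_add, Matrix.mul_smul, Matrix.mul_smul, Matrix.trace_add,
        Matrix.trace_smul, Matrix.trace_smul]
      simp
      rfl
    rw [hsplit] at hid
    nlinarith [ht.1, ht.2, htr0]
  -- continuity of f at 0
  have hFcont : Continuous F := by
    apply Continuous.add
    · exact (continuous_const.sub continuous_id).smul continuous_const
    · exact continuous_id.smul continuous_const
  have hRinv : (Ring.inverse : ℝ → ℝ) = Inv.inv := Ring.inverse_eq_inv'
  have hinv1 : ContinuousAt (fun t => (F t)⁻¹) 0 := by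
    have h2 : ContinuousAt Inv.inv (F 0) := by
      apply continuousAt_matrix_inv
      rw [hRinv, hF0]
      exact continuousAt_inv₀ hM0.det_pos.ne'
    exact h2.comp hFcont.continuousAt
  have hN0 : (Aᵀ * M0⁻¹ * A).PosDef := posdef_conj hM0.inv A hAinj
  have hNinv : ContinuousAt (fun t => (Aᵀ * (F t)⁻¹ * A)⁻¹) 0 := by
    have hinner : ContinuousAt (fun t => Aᵀ * (F t)⁻¹ * A) 0 :=
      continuousAt_matrix_mul' (continuousAt_matrix_mul' continuousAt_const hinv1)
        continuousAt_const
    have houter : ContinuousAt Inv.inv (Aᵀ * (F 0)⁻¹ * A) := by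
      apply continuousAt_matrix_inv
      rw [hRinv, hF0]
      exact continuousAt_inv₀ hN0.det_pos.ne'
    exact ContinuousAt.comp (f := fun t => Aᵀ * (F t)⁻¹ * A) houter hinner
  have hca : ContinuousAt f 0 := by
    apply continuousAt_matrix_trace
    exact continuousAt_matrix_mul'
      (continuousAt_matrix_mul'
        (continuousAt_matrix_mul'
          (continuousAt_matrix_mul'
            (continuousAt_matrix_mul' hinv1 continuousAt_const) hNinv)
          continuousAt_const) hinv1) continuousAt_const
  have htend : Filter.Tendsto f (nhdsWithin 0 (Set.Ioi (0:ℝ))) (nhds (f 0)) :=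
    hca.tendsto.mono_left nhdsWithin_le_nhds
  have hev : ∀ᶠ t in nhdsWithin (0:ℝ) (Set.Ioi 0), f t ≤ (s:ℝ) :=
    Filter.eventually_of_mem (Ioo_mem_nhdsGT one_pos) hfle
  have hfin : f 0 ≤ (s : ℝ) := le_of_tendsto htend hev
  simp only [hf] at hfin
  rwa [hF0] at hfin

lemma psd_sum {ι n : Type*} [Fintype n] (S : Finset ι) (f : ι → Matrix n n ℝ)
    (h : ∀ i ∈ S, (f i).PosSemidef) : (∑ i ∈ S, f i).PosSemidef :=
  Finset.sum_induction f Matrix.PosSemidef (fun _ _ ha hb => ha.add hb)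
    Matrix.PosSemidef.zero h

end DAaux

open DAaux in
/-- Kiefer–Wolfowitz type equivalence theorem for `D_A`-optimality,
equivalence (1) ⇔ (3) of Theorem 1: the `D_A`-optimal design minimizes the
maximum of the sensitivity function over the design space. -/
theorem DA_optimality_minimax_sensitivity
    {X : Type*} [Fintype X] [Nonempty X] (p s : ℕ) (hs : 0 < s) (hsp : s < p)
    (m : X → Matrix (Fin p) (Fin p) ℝ) (hm : ∀ x, (m x).PosSemidef)
    (A : Matrix (Fin p) (Fin s) ℝ) (hA : A.rank = s)
    (d : X → (X → ℝ) → ℝ)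
    (hd : ∀ x w, d x w =
      ((∑ y, w y • m y)⁻¹ * A * (Aᵀ * (∑ y, w y • m y)⁻¹ * A)⁻¹ * Aᵀ *
          (∑ y, w y • m y)⁻¹ * m x).trace)
    (wstar : X → ℝ) (hw0 : ∀ x, 0 ≤ wstar x) (hw1 : ∑ x, wstar x = 1)
    (hM : (∑ x, wstar x • m x).PosDef) :
    (∀ w : X → ℝ, (∀ x, 0 ≤ w x) → ∑ x, w x = 1 → (∑ x, w x • m x).PosDef →
        -Real.log (Aᵀ * (∑ x, w x • m x)⁻¹ * A).det ≤
          -Real.log (Aᵀ * (∑ x, wstar x • m x)⁻¹ * A).det) ↔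
      (∀ w : X → ℝ, (∀ x, 0 ≤ w x) → ∑ x, w x = 1 → (∑ x, w x • m x).PosDef →
        (Finset.univ.sup' Finset.univ_nonempty (fun x => d x wstar)) ≤
          (Finset.univ.sup' Finset.univ_nonempty (fun x => d x w))) := by
  classical
  have hAinj : ∀ v : Fin s → ℝ, A *ᵥ v = 0 → v = 0 := mulVec_inj hA
  -- mixing identity
  have hmix : ∀ (a b : X → ℝ) (t : ℝ),
      (∑ x, ((1 - t) * a x + t * b x) • m x)
        = (1 - t) • (∑ x, a x • m x) + t • (∑ x, b x • m x) := by
    intro a b t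
    rw [Finset.smul_sum, Finset.smul_sum, ← Finset.sum_add_distrib]
    refine Finset.sum_congr rfl fun x _ => ?_
    rw [add_smul, smul_smul, smul_smul]
  have hdelta : ∀ x : X, (∑ y, (if y = x then (1:ℝ) else 0) • m y) = m x := by
    intro x
    rw [Finset.sum_eq_single x (fun y _ hy => by simp [hy]) (fun h => absurd (Finset.mem_univ x) h)]
    simp
  -- the weighted-sum-of-d identity : for PD designs,  ∑ x, w x * d x w' relates to trace
  have htrsum : ∀ (w w' : X → ℝ), (∑ x, w' x • m x).PosDef →
      ((∑ y, w' y • m y)⁻¹ * A * (Aᵀ * (∑ y, w' y • m y)⁻¹ * A)⁻¹ * Aᵀ *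
          (∑ y, w' y • m y)⁻¹ * (∑ x, w x • m x)).trace = ∑ x, w x * d x w' := by
    intro w w' _
    rw [Finset.mul_sum, Matrix.trace_sum]
    refine Finset.sum_congr rfl fun x _ => ?_
    rw [Matrix.mul_smul, Matrix.trace_smul, hd x w', smul_eq_mul]
  -- s ≤ sup d(·, w) for any PD design w
  have hsup_ge : ∀ w : X → ℝ, (∀ x, 0 ≤ w x) → ∑ x, w x = 1 → (∑ x, w x • m x).PosDef →
      (s : ℝ) ≤ Finset.univ.sup' Finset.univ_nonempty (fun x => d x w) := by
    intro w hw0' hw1' hwPD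
    have hNw : (Aᵀ * (∑ x, w x • m x)⁻¹ * A).PosDef := posdef_conj hwPD.inv A hAinj
    have hid := trace_H_self hwPD hNw
    have h2 := htrsum w w hwPD
    rw [hid] at h2
    rw [h2]
    calc ∑ x, w x * d x w
        ≤ ∑ x, w x * Finset.univ.sup' Finset.univ_nonempty (fun x => d x w) := by
          refine Finset.sum_le_sum fun x _ => ?_
          exact mul_le_mul_of_nonneg_left
            (Finset.le_sup' (fun x => d x w) (Finset.mem_univ x)) (hw0' x)
      _ = Finset.univ.sup' Finset.univ_nonempty (fun x => d x w) := by
          rw [← Finset.sum_mul, hw1', one_mul]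
  constructor
  · -- (1) → (3)
    intro hopt w hw0' hw1' hwPD
    refine le_trans ?_ (hsup_ge w hw0' hw1' hwPD)
    -- sup d(·, wstar) ≤ s
    refine Finset.sup'_le _ _ fun x _ => ?_
    rw [hd]
    apply key hAinj hM (hm x)
    intro t ht
    set u : X → ℝ := fun y => (1 - t) * wstar y + t * (if y = x then 1 else 0) with hu
    have hMu : (∑ y, u y • m y) = (1 - t) • (∑ y, wstar y • m y) + t • m x := by
      rw [hu, hmix wstar (fun y => if y = x then (1:ℝ) else 0) t, hdelta x]
    have hu0 : ∀ y, 0 ≤ u y := by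
      intro y
      have : (0:ℝ) ≤ (if y = x then (1:ℝ) else 0) := by positivity
      have h1 : 0 ≤ 1 - t := by linarith [ht.2]
      exact add_nonneg (mul_nonneg h1 (hw0 y)) (mul_nonneg ht.1.le this)
    have hu1 : ∑ y, u y = 1 := by
      rw [hu]
      rw [Finset.sum_add_distrib, ← Finset.mul_sum, ← Finset.mul_sum, hw1]
      simp
    have huPD : (∑ y, u y • m y).PosDef := by
      rw [hMu]
      exact (posdef_smul hM (by linarith [ht.2])).add_posSemidef (psd_smul (hm x) ht.1.le)
    have := hopt u hu0 hu1 huPD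
    rwa [hMu] at this
  · -- (3) → (1)
    intro hmin w hw0' hw1' hwPD
    have hs0 : (0:ℝ) < s := by exact_mod_cast hs
    -- main claim: sup d(·, wstar) ≤ s
    have hsle : Finset.univ.sup' Finset.univ_nonempty (fun x => d x wstar) ≤ (s : ℝ) := by
      by_contra hcon
      push_neg at hcon
      set ε : ℝ := Finset.univ.sup' Finset.univ_nonempty (fun x => d x wstar) - s with hε
      have hεpos : 0 < ε := by rw [hε]; linarith
      -- regularization parameter
      set δ : ℝ := ε / (2 * s + ε) with hδ
      have hδpos : 0 < δ := div_pos hεpos (by linarith)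
      have hδlt : δ < 1 := by
        rw [hδ, div_lt_one (by linarith)]
        linarith
      -- the constrained maximization
      set T : (X → ℝ) → (X → ℝ) := fun v => fun y => (1 - δ) * v y + δ * wstar y with hT
      set g : (X → ℝ) → ℝ := fun v => -Real.log (Aᵀ * (∑ y, T v y • m y)⁻¹ * A).det with hg
      have hTM : ∀ v : X → ℝ, (∑ y, T v y • m y)
          = (1 - δ) • (∑ y, v y • m y) + δ • (∑ y, wstar y • m y) := fun v => hmix v wstar δ
      have hTPD : ∀ v ∈ stdSimplex ℝ X, (∑ y, T v y • m y).PosDef := by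
        intro v hv
        rw [hTM v]
        exact Matrix.PosDef.posSemidef_add
          (psd_smul (psd_sum Finset.univ (fun y => v y • m y)
            (fun y _ => psd_smul (hm y) (hv.1 y))) (by linarith))
          (posdef_smul hM hδpos)
      have hgcont : ContinuousOn g (stdSimplex ℝ X) := by
        intro v hv
        apply ContinuousAt.continuousWithinAt
        have hMcont : Continuous (fun v : X → ℝ => ∑ y, T v y • m y) := by
          apply continuous_finset_sum
          intro y _
          exact (((continuous_const.mul (continuous_apply y)).add continuous_const).smul
            continuous_const)
        have hPDv := hTPD v hv
        have hNv : (Aᵀ * (∑ y, T v y • m y)⁻¹ * A).PosDef := posdef_conj hPDv.inv A hAinj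
        have hRinv : (Ring.inverse : ℝ → ℝ) = Inv.inv := Ring.inverse_eq_inv'
        have hinv : ContinuousAt (fun v : X → ℝ => (∑ y, T v y • m y)⁻¹) v := by
          have h2 : ContinuousAt Inv.inv (∑ y, T v y • m y) := by
            apply continuousAt_matrix_inv
            rw [hRinv]
            exact continuousAt_inv₀ hPDv.det_pos.ne'
          exact ContinuousAt.comp (f := fun v : X → ℝ => ∑ y, T v y • m y) h2 hMcont.continuousAt
        have hNc : ContinuousAt (fun v : X → ℝ => Aᵀ * (∑ y, T v y • m y)⁻¹ * A) v :=
          continuousAt_matrix_mul' (continuousAt_matrix_mul' continuousAt_const hinv)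
            continuousAt_const
        have hdetc : ContinuousAt (fun v : X → ℝ => (Aᵀ * (∑ y, T v y • m y)⁻¹ * A).det) v :=
          ContinuousAt.comp (f := fun v : X → ℝ => Aᵀ * (∑ y, T v y • m y)⁻¹ * A) (continuous_id.matrix_det.continuousAt) hNc
        have hlogc : ContinuousAt
            (fun v : X → ℝ => Real.log (Aᵀ * (∑ y, T v y • m y)⁻¹ * A).det) v :=
          ContinuousAt.comp (f := fun v : X → ℝ => (Aᵀ * (∑ y, T v y • m y)⁻¹ * A).det) (Real.continuousAt_log hNv.det_pos.ne') hdetc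
        exact hlogc.neg
      have hwstarK : wstar ∈ stdSimplex ℝ X := ⟨hw0, hw1⟩
      obtain ⟨v0, hv0K, hv0max⟩ :=
        (isCompact_stdSimplex ℝ X).exists_isMaxOn ⟨wstar, hwstarK⟩ hgcont
      set wδ : X → ℝ := T v0 with hwδ
      have hwδ0 : ∀ y, 0 ≤ wδ y := fun y =>
        add_nonneg (mul_nonneg (by linarith) (hv0K.1 y)) (mul_nonneg hδpos.le (hw0 y))
      have hwδ1 : ∑ y, wδ y = 1 := by
        rw [hwδ]
        simp only [hT]
        rw [Finset.sum_add_distrib, ← Finset.mul_sum, ← Finset.mul_sum, hv0K.2, hw1]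
        ring
      have hwδPD : (∑ y, wδ y • m y).PosDef := hTPD v0 hv0K
      -- the sensitivity bound at the constrained maximizer
      have hbound : ∀ x : X, d x wδ ≤ s / (1 - δ) := by
        intro x
        set vx : X → ℝ := T (fun y => if y = x then (1:ℝ) else 0) with hvx
        have hMvx : (∑ y, vx y • m y) = (1 - δ) • m x + δ • (∑ y, wstar y • m y) := by
          rw [hvx, hTM, hdelta x]
        have hMvxPSD : (∑ y, vx y • m y).PosSemidef := by
          rw [hMvx]
          exact (psd_smul (hm x) (by linarith)).add (psd_smul hM.posSemidef hδpos.le)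
        have hkey := key hAinj hwδPD hMvxPSD ?_
        · -- use hkey : trace (Hδ * Mvx) ≤ s to bound d x wδ
          rw [hMvx] at hkey
          have hNδ : (Aᵀ * (∑ y, wδ y • m y)⁻¹ * A).PosDef := posdef_conj hwδPD.inv A hAinj
          have hHpsd := H_psd hwδPD hNδ
          have htr2 : 0 ≤ ((∑ y, wδ y • m y)⁻¹ * A * (Aᵀ * (∑ y, wδ y • m y)⁻¹ * A)⁻¹ * Aᵀ *
              (∑ y, wδ y • m y)⁻¹ * (∑ y, wstar y • m y)).trace :=
            psd_trace_mul_nonneg hHpsd (psd_sum Finset.univ _ (fun y _ => psd_smul (hm y) (hw0 y)))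
          rw [Matrix.mul_add, Matrix.mul_smul, Matrix.mul_smul, Matrix.trace_add,
            Matrix.trace_smul, Matrix.trace_smul] at hkey
          have hdx : d x wδ = ((∑ y, wδ y • m y)⁻¹ * A * (Aᵀ * (∑ y, wδ y • m y)⁻¹ * A)⁻¹ * Aᵀ *
              (∑ y, wδ y • m y)⁻¹ * m x).trace := hd x wδ
          rw [le_div_iff₀ (by linarith)]
          simp only [smul_eq_mul] at hkey
          rw [hdx]
          nlinarith [hδpos, hδlt, htr2]
        · -- the maximality hypothesis for key
          intro t ht
          set v1 : X → ℝ := fun y => (1 - t) * v0 y + t * (if y = x then 1 else 0) with hv1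
          have hv1K : v1 ∈ stdSimplex ℝ X := by
            constructor
            · intro y
              have : (0:ℝ) ≤ (if y = x then (1:ℝ) else 0) := by positivity
              exact add_nonneg (mul_nonneg (by linarith [ht.2]) (hv0K.1 y))
                (mul_nonneg ht.1.le this)
            · rw [hv1]
              rw [Finset.sum_add_distrib, ← Finset.mul_sum, ← Finset.mul_sum, hv0K.2]
              simp
          have hTv1 : T v1 = fun y => (1 - t) * wδ y + t * vx y := by
            funext y
            simp only [hT, hv1, hvx, hwδ]
            ring
          have hMT1 : (∑ y, T v1 y • m y)
              = (1 - t) • (∑ y, wδ y • m y) + t • (∑ y, vx y • m y) := by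
            rw [hTv1]
            exact hmix wδ vx t
          have hle : -Real.log (Aᵀ * (∑ y, T v1 y • m y)⁻¹ * A).det ≤
              -Real.log (Aᵀ * (∑ y, wδ y • m y)⁻¹ * A).det := hv0max hv1K
          rw [hMT1] at hle
          exact hle
      -- use (3) with wδ and derive the contradiction
      have hminδ := hmin wδ hwδ0 hwδ1 hwδPD
      have hsupδ : Finset.univ.sup' Finset.univ_nonempty (fun x => d x wδ) ≤ s / (1 - δ) :=
        Finset.sup'_le _ _ fun x _ => hbound x
      have hsplit : s / (1 - δ) < s + ε := by
        have h2s : (0:ℝ) < 2 * s + ε := by linarith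
        have h1 : (1 - δ) = 2 * s / (2 * s + ε) := by
          rw [hδ]
          field_simp
          ring
        rw [h1, div_div_eq_mul_div, div_lt_iff₀ (by linarith)]
        nlinarith
      have : Finset.univ.sup' Finset.univ_nonempty (fun x => d x wstar) < s + ε := by
        calc Finset.univ.sup' Finset.univ_nonempty (fun x => d x wstar)
            ≤ Finset.univ.sup' Finset.univ_nonempty (fun x => d x wδ) := hminδ
          _ ≤ s / (1 - δ) := hsupδ
          _ < s + ε := hsplit
      rw [hε] at this
      linarith
    -- finish: ineq1 + weighted sum bound
    have h1 := ineq1 hAinj hwPD hM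
    have h2 := htrsum w wstar hM
    have h3 : ∑ x, w x * d x wstar ≤ (s:ℝ) := by
      calc ∑ x, w x * d x wstar
          ≤ ∑ x, w x * Finset.univ.sup' Finset.univ_nonempty (fun x => d x wstar) := by
            refine Finset.sum_le_sum fun x _ => ?_
            exact mul_le_mul_of_nonneg_left
              (Finset.le_sup' (fun x => d x wstar) (Finset.mem_univ x)) (hw0' x)
        _ = Finset.univ.sup' Finset.univ_nonempty (fun x => d x wstar) := by
            rw [← Finset.sum_mul, hw1', one_mul]
        _ ≤ (s:ℝ) := hsle
    rw [h2] at h1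
    linarith
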